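/- Relative entropy bound for the EPL state: with ρ(p,p_d) the phase-averaged EPL state and σ_SEP(p) = (p²/4)P_odd ⊗ P_odd + ((1−p)p/2)(|11⟩⟨11| ⊗ P_odd + P_odd ⊗ |11⟩⟨11|) + (1−p)²|11⟩⟨11| ⊗ |11⟩⟨11|, the quantum relative entropy satisfies S(ρ(p,p_d) ‖ σ_SEP(p)) = (p²/2)(1 − h(p_d)), where h is the binary entropy function. -/

import Mathlib

open Matrix Kronecker

noncomputable section

def ket (a b : Fin 2) : Fin 2 × Fin 2 → ℂ := fun i => if i = (a, b) then 1 else 0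

def proj (v : Fin 2 × Fin 2 → ℂ) : Matrix (Fin 2 × Fin 2) (Fin 2 × Fin 2) ℂ :=
  Matrix.vecMulVec v (star v)

/-- Projector onto the odd-parity two-qubit subspace. -/
def Podd : Matrix (Fin 2 × Fin 2) (Fin 2 × Fin 2) ℂ := proj (ket 0 1) + proj (ket 1 0)

/-- `|01⟩⟨10|`. -/
def ketbra0110 : Matrix (Fin 2 × Fin 2) (Fin 2 × Fin 2) ℂ :=
  Matrix.vecMulVec (ket 0 1) (star (ket 1 0))

/-- `|10⟩⟨01|`. -/
def ketbra1001 : Matrix (Fin 2 × Fin 2) (Fin 2 × Fin 2) ℂ :=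
  Matrix.vecMulVec (ket 1 0) (star (ket 0 1))

/-- The phase-averaged EPL state `ρ(p, p_d)`. -/
def eplRho (p pd : ℝ) :
    Matrix ((Fin 2 × Fin 2) × (Fin 2 × Fin 2)) ((Fin 2 × Fin 2) × (Fin 2 × Fin 2)) ℂ :=
  ((p ^ 2 / 4 : ℝ) : ℂ) •
      (Podd ⊗ₖ Podd + ((2 * pd - 1 : ℝ) : ℂ) •
        (ketbra0110 ⊗ₖ ketbra1001 + ketbra1001 ⊗ₖ ketbra0110))
    + (((1 - p) * p / 2 : ℝ) : ℂ) • (proj (ket 1 1) ⊗ₖ Podd + Podd ⊗ₖ proj (ket 1 1))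
    + (((1 - p) ^ 2 : ℝ) : ℂ) • (proj (ket 1 1) ⊗ₖ proj (ket 1 1))

/-- The separable reference state `σ_SEP(p)`. -/
def eplSigma (p : ℝ) :
    Matrix ((Fin 2 × Fin 2) × (Fin 2 × Fin 2)) ((Fin 2 × Fin 2) × (Fin 2 × Fin 2)) ℂ :=
  ((p ^ 2 / 4 : ℝ) : ℂ) • (Podd ⊗ₖ Podd)
    + (((1 - p) * p / 2 : ℝ) : ℂ) • (proj (ket 1 1) ⊗ₖ Podd + Podd ⊗ₖ proj (ket 1 1))
    + (((1 - p) ^ 2 : ℝ) : ℂ) • (proj (ket 1 1) ⊗ₖ proj (ket 1 1))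

/-- The binary entropy function (base-2 logarithm). -/
def binEnt (x : ℝ) : ℝ := -(x * Real.logb 2 x) - (1 - x) * Real.logb 2 (1 - x)

/-! ### Auxiliary machinery -/

section general

open Polynomial

set_option linter.unusedSectionVars false

variable {n : Type*} [Fintype n] [DecidableEq n] [Nonempty n]

lemma coe_smul_mat (x : ℝ) (M : Matrix n n ℂ) : (x : ℂ) • M = x • M := by
  rw [← algebraMap_smul ℂ x M, Complex.coe_algebraMap]

lemma cfc_spectral {ι : Type*} [Fintype ι] [DecidableEq ι]
    {A : Matrix n n ℂ} (hA : A.IsHermitian) (c : ι → ℝ) (P : ι → Matrix n n ℂ)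
    (hidem : ∀ i, P i * P i = P i)
    (horth : ∀ i j, i ≠ j → P i * P j = 0)
    (hAeq : A = ∑ i, (c i : ℂ) • P i)
    (hsum : ∑ i, P i = 1) (f : ℝ → ℝ) :
    hA.cfc f = ∑ i, ((f (c i) : ℝ) : ℂ) • P i := by
  classical
  have hsa : IsSelfAdjoint A := hA
  have hpow : ∀ m : ℕ, A ^ m = ∑ i, ((c i ^ m : ℝ) : ℂ) • P i := by
    intro m; induction m with
    | zero => simpa using hsum.symm
    | succ m ih =>
      calc A ^ (m + 1) = A ^ m * A := pow_succ A m
        _ = ∑ i, ∑ j, (((c i ^ m : ℝ) : ℂ) * ((c j : ℝ) : ℂ)) • (P i * P j) := by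
            rw [ih, hAeq, Finset.sum_mul]
            refine Finset.sum_congr rfl fun i _ => ?_
            rw [Finset.mul_sum]
            refine Finset.sum_congr rfl fun j _ => ?_
            rw [smul_mul_assoc, mul_smul_comm, smul_smul]
        _ = ∑ i, ((c i ^ (m + 1) : ℝ) : ℂ) • P i := by
            refine Finset.sum_congr rfl fun i _ => ?_
            rw [Finset.sum_eq_single i
              (fun j _ hj => by rw [horth i j (Ne.symm hj), smul_zero])
              (by simp)]
            rw [hidem i]
            push_cast
            ring_nf
  have haeval : ∀ q : ℝ[X], aeval A q = ∑ i, ((q.eval (c i) : ℝ) : ℂ) • P i := by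
    intro q
    rw [aeval_eq_sum_range]
    have hk : ∀ k : ℕ, q.coeff k • A ^ k = ∑ i, ((q.coeff k * c i ^ k : ℝ) : ℂ) • P i := by
      intro k
      rw [hpow k, Finset.smul_sum]
      refine Finset.sum_congr rfl fun i _ => ?_
      rw [← coe_smul_mat, smul_smul]
      norm_cast
    simp_rw [hk]
    rw [Finset.sum_comm]
    refine Finset.sum_congr rfl fun i _ => ?_
    rw [← Finset.sum_smul]
    congr 1
    rw [Polynomial.eval_eq_sum_range]
    push_cast
    ring
  have hspec : (spectrum ℝ A) ⊆ ↑(Finset.image c Finset.univ) := by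
    intro x hx
    have hm : aeval A (∏ r ∈ Finset.image c Finset.univ, (X - C r)) = 0 := by
      rw [haeval]
      refine Finset.sum_eq_zero fun i _ => ?_
      have h0 : (∏ r ∈ Finset.image c Finset.univ, (X - C r)).eval (c i) = 0 := by
        rw [Polynomial.eval_prod]
        exact Finset.prod_eq_zero (Finset.mem_image_of_mem c (Finset.mem_univ i)) (by simp)
      rw [h0]
      simp
    have hx2 := spectrum.subset_polynomial_aeval A
      (∏ r ∈ Finset.image c Finset.univ, (X - C r)) ⟨x, hx, rfl⟩
    rw [hm, spectrum.zero_eq] at hx2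
    have h0 : (∏ r ∈ Finset.image c Finset.univ, (X - C r)).eval x = 0 := hx2
    rw [Polynomial.eval_prod] at h0
    obtain ⟨r, hr, hr0⟩ := Finset.prod_eq_zero_iff.mp h0
    simp only [Polynomial.eval_sub, Polynomial.eval_X, Polynomial.eval_C, sub_eq_zero] at hr0
    simpa [hr0] using hr
  set q : ℝ[X] := Lagrange.interpolate (Finset.image c Finset.univ) id f with hqdef
  have hq : ∀ x ∈ Finset.image c Finset.univ, q.eval x = f x := fun x hx => by
    simpa [hqdef] using Lagrange.eval_interpolate_at_node f (Set.injOn_id _) hx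
  have h1 : hA.cfc f = cfc (fun x => q.eval x) A := by
    rw [← hA.cfc_eq]
    exact cfc_congr fun x hx => (hq x (hspec hx)).symm
  rw [h1, cfc_polynomial q A hsa, haeval]
  exact Finset.sum_congr rfl fun i _ =>
    by rw [hq (c i) (Finset.mem_image_of_mem c (Finset.mem_univ i))]

lemma trace_mul_sum {ι : Type*} [Fintype ι] [DecidableEq ι]
    (P : ι → Matrix n n ℂ)
    (hidem : ∀ i, P i * P i = P i)
    (horth : ∀ i j, i ≠ j → P i * P j = 0)
    (d g : ι → ℂ) :
    ((∑ i, d i • P i) * (∑ i, g i • P i)).trace = ∑ i, d i * g i * (P i).trace := by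
  rw [Finset.sum_mul, Matrix.trace_sum]
  refine Finset.sum_congr rfl fun i _ => ?_
  rw [Finset.mul_sum, Matrix.trace_sum, Finset.sum_eq_single i
    (fun j _ hj => by
      rw [smul_mul_assoc, mul_smul_comm, horth i j (Ne.symm hj), smul_zero, smul_zero,
        Matrix.trace_zero])
    (by simp)]
  rw [smul_mul_assoc, mul_smul_comm, hidem i, Matrix.trace_smul, Matrix.trace_smul,
    smul_eq_mul, smul_eq_mul]
  ring

end general

/-! ### The spectral projectors of the EPL state -/

abbrev EIdx := (Fin 2 × Fin 2) × (Fin 2 × Fin 2)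

def EB (x y : EIdx) : Matrix EIdx EIdx ℂ := Matrix.single x y 1

lemma EB_mul (x y z w : EIdx) : EB x y * EB z w = if y = z then EB x w else 0 := by
  by_cases h : y = z
  · subst h; simp [EB]
  · simp [EB, h]

lemma proj_ket_eq (a b : Fin 2) :
    proj (ket a b) = Matrix.single (a, b) (a, b) (1 : ℂ) := by
  ext i j
  simp only [proj, ket, Matrix.vecMulVec_apply, Pi.star_apply, Matrix.single,
    Matrix.of_apply]
  split_ifs
  all_goals try simp_all
  all_goals aesop

lemma ketbra0110_eq :
    ketbra0110 = Matrix.single ((0 : Fin 2), (1 : Fin 2)) (1, 0) (1 : ℂ) := by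
  ext i j
  simp only [ketbra0110, ket, Matrix.vecMulVec_apply, Pi.star_apply, Matrix.single,
    Matrix.of_apply]
  split_ifs
  all_goals try simp_all
  all_goals aesop

lemma ketbra1001_eq :
    ketbra1001 = Matrix.single ((1 : Fin 2), (0 : Fin 2)) (0, 1) (1 : ℂ) := by
  ext i j
  simp only [ketbra1001, ket, Matrix.vecMulVec_apply, Pi.star_apply, Matrix.single,
    Matrix.of_apply]
  split_ifs
  all_goals try simp_all
  all_goals aesop

lemma kron_std (x y z w : Fin 2 × Fin 2) :
    (Matrix.single x y (1 : ℂ)) ⊗ₖ (Matrix.single z w 1)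
      = EB (x, z) (y, w) := by
  ext ⟨i, j⟩ ⟨k, l⟩
  simp only [EB, Matrix.kroneckerMap_apply, Matrix.single, Matrix.of_apply,
    Prod.mk.injEq]
  split_ifs
  all_goals try simp_all
  all_goals aesop

def o1 : Fin 2 × Fin 2 := (0, 1)
def o2 : Fin 2 × Fin 2 := (1, 0)
def w2 : Fin 2 × Fin 2 := (1, 1)

def EP : Fin 6 → Matrix EIdx EIdx ℂ := fun i =>
  match i with
  | 0 => EB (o1, o1) (o1, o1) + EB (o2, o2) (o2, o2)
  | 1 => (1 / 2 : ℂ) • (EB (o1, o2) (o1, o2) + EB (o2, o1) (o2, o1)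
      + EB (o1, o2) (o2, o1) + EB (o2, o1) (o1, o2))
  | 2 => (1 / 2 : ℂ) • (EB (o1, o2) (o1, o2) + EB (o2, o1) (o2, o1)
      - EB (o1, o2) (o2, o1) - EB (o2, o1) (o1, o2))
  | 3 => EB (w2, o1) (w2, o1) + EB (w2, o2) (w2, o2) + EB (o1, w2) (o1, w2) + EB (o2, w2) (o2, w2)
  | 4 => EB (w2, w2) (w2, w2)
  | 5 => 1 - (EB (o1, o1) (o1, o1) + EB (o2, o2) (o2, o2)
      + (EB (o1, o2) (o1, o2) + EB (o2, o1) (o2, o1))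
      + (EB (w2, o1) (w2, o1) + EB (w2, o2) (w2, o2) + EB (o1, w2) (o1, w2) + EB (o2, w2) (o2, w2))
      + EB (w2, w2) (w2, w2))

set_option maxHeartbeats 2000000 in
lemma EP_idem : ∀ i : Fin 6, EP i * EP i = EP i := by
  intro i
  fin_cases i <;>
    · simp only [EP]
      simp only [Matrix.mul_add, Matrix.add_mul,
        Matrix.mul_sub, Matrix.sub_mul, Matrix.mul_one, Matrix.one_mul,
        smul_mul_assoc, mul_smul_comm, EB_mul, o1, o2, w2, Prod.mk.injEq, Fin.reduceEq,
        and_true, true_and, and_false, false_and, and_self, reduceIte, if_true, if_false]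
      try module

set_option maxHeartbeats 2000000 in
lemma EP_orth : ∀ i j : Fin 6, i ≠ j → EP i * EP j = 0 := by
  intro i j hij
  fin_cases i <;> fin_cases j <;> first
    | exact absurd rfl hij
    | · clear hij
        simp only [EP]
        simp only [Matrix.mul_add, Matrix.add_mul,
          Matrix.mul_sub, Matrix.sub_mul, Matrix.mul_one, Matrix.one_mul,
          smul_mul_assoc, mul_smul_comm, EB_mul, o1, o2, w2, Prod.mk.injEq, Fin.reduceEq,
          and_true, true_and, and_false, false_and, and_self, reduceIte, if_true, if_false]
        try module

lemma EP_sum : ∑ i, EP i = 1 := by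
  rw [Fin.sum_univ_six]
  simp only [EP]
  module

/-- eigenvalues of `ρ` -/
def dR (p pd : ℝ) : Fin 6 → ℝ := fun i =>
  match i with
  | 0 => p ^ 2 / 4
  | 1 => p ^ 2 / 2 * pd
  | 2 => p ^ 2 / 2 * (1 - pd)
  | 3 => (1 - p) * p / 2
  | 4 => (1 - p) ^ 2
  | 5 => 0

/-- eigenvalues of `σ` -/
def dS (p : ℝ) : Fin 6 → ℝ := fun i =>
  match i with
  | 0 => p ^ 2 / 4
  | 1 => p ^ 2 / 4
  | 2 => p ^ 2 / 4
  | 3 => (1 - p) * p / 2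
  | 4 => (1 - p) ^ 2
  | 5 => 0

lemma EB_trace (x y : EIdx) : (EB x y).trace = if x = y then 1 else 0 := by
  by_cases h : x = y
  · subst h; simp [EB, Matrix.trace_single_eq_same]
  · simp [EB, h, Matrix.trace_single_eq_of_ne _ _ _ h]

lemma real_key (p pd : ℝ) (hp0 : 0 < p) (hp1 : p ≤ 1) (hd0 : 0 ≤ pd) (hd1 : pd ≤ 1) :
    p ^ 2 / 2 * pd * Real.logb 2 (p ^ 2 / 2 * pd)
      + p ^ 2 / 2 * (1 - pd) * Real.logb 2 (p ^ 2 / 2 * (1 - pd))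
      - p ^ 2 / 2 * Real.logb 2 (p ^ 2 / 4)
      = p ^ 2 / 2 * (1 - binEnt pd) := by
  have hs : (0 : ℝ) < p ^ 2 / 2 := by positivity
  have h4 : (p ^ 2 / 4 : ℝ) = (p ^ 2 / 2) / 2 := by ring
  have hlog4 : Real.logb 2 (p ^ 2 / 4) = Real.logb 2 (p ^ 2 / 2) - 1 := by
    rw [h4, Real.logb_div hs.ne' two_ne_zero, Real.logb_self_eq_one (by norm_num)]
  rcases eq_or_lt_of_le hd0 with h0 | h0
  · rw [← h0]
    simp only [binEnt, mul_zero, Real.logb_zero, sub_zero, zero_mul, neg_zero, zero_add,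
      mul_one, sub_self, Real.logb_one, zero_sub, mul_neg, sub_zero, zero_mul]
    rw [hlog4]
    ring
  · rcases eq_or_lt_of_le hd1 with h1 | h1
    · rw [h1]
      simp only [binEnt, sub_self, mul_zero, Real.logb_zero, zero_mul, mul_one,
        Real.logb_one, mul_zero, zero_sub, neg_zero, sub_zero, mul_one]
      rw [hlog4]
      ring
    · have h1' : (0 : ℝ) < 1 - pd := by linarith
      rw [Real.logb_mul hs.ne' h0.ne', Real.logb_mul hs.ne' h1'.ne', hlog4, binEnt]
      ring

lemma rho_decomp (p pd : ℝ) : eplRho p pd = ∑ i, ((dR p pd i : ℝ) : ℂ) • EP i := by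
  rw [Fin.sum_univ_six]
  simp only [dR, EP]
  rw [eplRho, Podd, proj_ket_eq, proj_ket_eq, proj_ket_eq, ketbra0110_eq, ketbra1001_eq]
  simp only [Matrix.add_kronecker, Matrix.kronecker_add, kron_std]
  rw [show ((0 : Fin 2), (1 : Fin 2)) = o1 from rfl, show ((1 : Fin 2), (0 : Fin 2)) = o2 from rfl,
    show ((1 : Fin 2), (1 : Fin 2)) = w2 from rfl]
  push_cast
  module

lemma sigma_decomp (p : ℝ) : eplSigma p = ∑ i, ((dS p i : ℝ) : ℂ) • EP i := by
  rw [Fin.sum_univ_six]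
  simp only [dS, EP]
  rw [eplSigma, Podd, proj_ket_eq, proj_ket_eq, proj_ket_eq]
  simp only [Matrix.add_kronecker, Matrix.kronecker_add, kron_std]
  rw [show ((0 : Fin 2), (1 : Fin 2)) = o1 from rfl, show ((1 : Fin 2), (0 : Fin 2)) = o2 from rfl,
    show ((1 : Fin 2), (1 : Fin 2)) = w2 from rfl]
  push_cast
  module

/-- Relative entropy bound for the EPL state:
`S(ρ(p,p_d) ‖ σ_SEP(p)) = (p²/2)(1 − h(p_d))`, where `S(ρ‖σ) = tr(ρ log₂ ρ) − tr(ρ log₂ σ)`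
is computed via the functional calculus (with the convention `log 0 = 0`). -/
theorem epl_relative_entropy (p pd : ℝ) (hp0 : 0 < p) (hp1 : p ≤ 1)
    (hd0 : 0 ≤ pd) (hd1 : pd ≤ 1)
    (hρ : (eplRho p pd).IsHermitian) (hσ : (eplSigma p).IsHermitian) :
    ((eplRho p pd * hρ.cfc (Real.logb 2)).trace
        - (eplRho p pd * hσ.cfc (Real.logb 2)).trace).re
      = p ^ 2 / 2 * (1 - binEnt pd) := by
  have hcfcρ := cfc_spectral hρ (dR p pd) EP EP_idem EP_orth (rho_decomp p pd) EP_sum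
    (Real.logb 2)
  have hcfcσ := cfc_spectral hσ (dS p) EP EP_idem EP_orth (sigma_decomp p) EP_sum
    (Real.logb 2)
  rw [hcfcρ, hcfcσ, rho_decomp p pd]
  rw [trace_mul_sum EP EP_idem EP_orth (fun i => ((dR p pd i : ℝ) : ℂ))
      (fun i => ((Real.logb 2 (dR p pd i) : ℝ) : ℂ)),
    trace_mul_sum EP EP_idem EP_orth (fun i => ((dR p pd i : ℝ) : ℂ))
      (fun i => ((Real.logb 2 (dS p i) : ℝ) : ℂ))]
  rw [Fin.sum_univ_six, Fin.sum_univ_six]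
  simp only [dR, dS, EP]
  simp only [Matrix.trace_add, Matrix.trace_sub, Matrix.trace_smul, Matrix.trace_one,
    EB_trace, o1, o2, w2, Prod.mk.injEq, Fin.reduceEq, and_true, true_and, and_false,
    false_and, and_self, reduceIte, if_true, if_false]
  norm_num
  simp only [← Complex.ofReal_pow, Complex.ofReal_re]
  linear_combination real_key p pd hp0 hp1 hd0 hd1


end
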